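/- Let a ≥ 0, ε > 0. For all t ≥ 0, the squared ℓ² norm of the sequence (n H_n(t))_{n∈ℤ} satisfies Σ_{n∈ℤ} |n H_n(t)|² < 2 + 4/ε + 4π²/(3ε²). -/

import Mathlib

set_option maxHeartbeats 1000000


/-- `h_n = (a + ε n²)/2`. -/
noncomputable def hcoef (a ε : ℝ) (n : ℤ) : ℝ := (a + ε * (n : ℝ) ^ 2) / 2

/-- The real-valued fundamental oscillator solution `H_n(t)`:
`e^{-h t} sinh(ω t)/ω` when `ω² = h² - n² > 0`,
`e^{-h t} sin(|ω| t)/|ω|` when `h² - n² < 0`, and `t e^{-h t}` when `h² = n²`. -/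
noncomputable def Hfun (a ε : ℝ) (n : ℤ) (t : ℝ) : ℝ :=
  if 0 < (hcoef a ε n) ^ 2 - (n : ℝ) ^ 2 then
    Real.exp (-(hcoef a ε n) * t) *
      Real.sinh (Real.sqrt ((hcoef a ε n) ^ 2 - (n : ℝ) ^ 2) * t) /
      Real.sqrt ((hcoef a ε n) ^ 2 - (n : ℝ) ^ 2)
  else if (hcoef a ε n) ^ 2 - (n : ℝ) ^ 2 < 0 then
    Real.exp (-(hcoef a ε n) * t) *
      Real.sin (Real.sqrt ((n : ℝ) ^ 2 - (hcoef a ε n) ^ 2) * t) /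
      Real.sqrt ((n : ℝ) ^ 2 - (hcoef a ε n) ^ 2)
  else Real.exp (-(hcoef a ε n) * t) * t

/-- `n̄ = 1 + ⌊2/ε⌋`. -/
noncomputable def nbar (ε : ℝ) : ℤ := 1 + ⌊(2 : ℝ) / ε⌋

private lemma two_mul_le_exp {x : ℝ} (hx : 0 ≤ x) : 2 * x ≤ Real.exp x := by
  have h1 : 1 + x / 2 ≤ Real.exp (x / 2) := by linarith [Real.add_one_le_exp (x / 2)]
  have h2 : (1 + x / 2) ^ 2 ≤ Real.exp (x / 2) ^ 2 := by
    apply pow_le_pow_left₀ (by linarith) h1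
  have h3 : Real.exp (x / 2) ^ 2 = Real.exp x := by
    rw [sq, ← Real.exp_add]; norm_num
  nlinarith [sq_nonneg (1 - x / 2)]

private lemma t_exp_le {c t : ℝ} (hc : 0 < c) (ht : 0 ≤ t) :
    t * Real.exp (-(c * t)) ≤ 1 / (2 * c) := by
  have h := two_mul_le_exp (mul_nonneg hc.le ht)
  have he : (0:ℝ) < Real.exp (c * t) := Real.exp_pos _
  have e1 : Real.exp (-(c * t)) * Real.exp (c * t) = 1 := by
    rw [← Real.exp_add]; ring_nf; exact Real.exp_zero
  have he2 : (0:ℝ) < Real.exp (-(c * t)) := Real.exp_pos _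
  rw [le_div_iff₀ (by positivity)]
  nlinarith

private lemma sinh_le_half_exp (x : ℝ) : Real.sinh x ≤ Real.exp x / 2 := by
  rw [Real.sinh_eq]
  have := Real.exp_pos (-x)
  linarith

private lemma sinh_le_mul_exp {x : ℝ} (hx : 0 ≤ x) : Real.sinh x ≤ x * Real.exp x := by
  rw [Real.sinh_eq]
  have h1 : 1 + (-(2*x)) ≤ Real.exp (-(2*x)) := by linarith [Real.add_one_le_exp (-(2*x))]
  have h2 : Real.exp (-x) = Real.exp x * Real.exp (-(2*x)) := by
    rw [← Real.exp_add]; ring_nf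
  have h3 : (0:ℝ) < Real.exp x := Real.exp_pos _
  rw [h2]
  nlinarith

/-- Main bound in the hyperbolic regime. -/
private lemma E_bound {h ω t c : ℝ} (hω : 0 < ω) (hωh : ω < h) (ht : 0 ≤ t) (hc : 0 < c)
    (hcase : c ≤ 2 * ω ∨ c ≤ 2 * (h - ω)) :
    Real.exp (-h * t) * Real.sinh (ω * t) ≤ ω / c := by
  rcases hcase with hc1 | hc2
  · have h1 : Real.sinh (ω * t) ≤ Real.exp (ω * t) / 2 := sinh_le_half_exp _
    have h2 : Real.exp (-h * t) * Real.exp (ω * t) = Real.exp ((ω - h) * t) := by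
      rw [← Real.exp_add]; ring_nf
    have h3 : Real.exp ((ω - h) * t) ≤ 1 := by
      apply Real.exp_le_one_iff.mpr
      nlinarith
    have h4 : (0:ℝ) < Real.exp (-h * t) := Real.exp_pos _
    have h5 : Real.exp (-h * t) * Real.sinh (ω * t) ≤ 1 / 2 := by nlinarith
    have h6 : 1 / 2 ≤ ω / c := by
      rw [div_le_div_iff₀ (by norm_num) hc]; linarith
    linarith
  · have h1 : Real.sinh (ω * t) ≤ (ω * t) * Real.exp (ω * t) :=
      sinh_le_mul_exp (by positivity)
    have h2 : Real.exp (-h * t) * Real.exp (ω * t) = Real.exp (-((h - ω) * t)) := by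
      rw [← Real.exp_add]; ring_nf
    have h4 : (0:ℝ) < Real.exp (-h * t) := Real.exp_pos _
    have h5 : Real.exp (-h * t) * Real.sinh (ω * t) ≤ ω * (t * Real.exp (-((h - ω) * t))) := by
      calc Real.exp (-h * t) * Real.sinh (ω * t)
        ≤ Real.exp (-h * t) * ((ω * t) * Real.exp (ω * t)) := by nlinarith
        _ = ω * (t * (Real.exp (-h * t) * Real.exp (ω * t))) := by ring
        _ = ω * (t * Real.exp (-((h - ω) * t))) := by rw [h2]
    have h6 : t * Real.exp (-((h - ω) * t)) ≤ 1 / (2 * (h - ω)) := t_exp_le (by linarith) ht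
    calc Real.exp (-h * t) * Real.sinh (ω * t) ≤ ω * (1 / (2 * (h - ω))) := by nlinarith
      _ = ω / (2 * (h - ω)) := by ring
      _ ≤ ω / c := by
          apply div_le_div_of_nonneg_left hω.le hc
          linarith

/-- The key pointwise bounds. -/
private lemma key_bounds (a ε : ℝ) (ha : 0 ≤ a) (hε : 0 < ε) (n : ℤ) (t : ℝ) (ht : 0 ≤ t) :
    |(n : ℝ)| * |Hfun a ε n t| ≤ 1 ∧
    (2 < ε * |(n : ℝ)| → |(n : ℝ)| * |Hfun a ε n t| ≤ 2 / (ε * |(n : ℝ)|)) := by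
  set h := hcoef a ε n with hhdef
  have hh : h = (a + ε * (n : ℝ) ^ 2) / 2 := rfl
  have hh0 : 0 ≤ h := by rw [hh]; positivity
  have hhe : ε * (n : ℝ) ^ 2 / 2 ≤ h := by rw [hh]; linarith
  by_cases hn : (n : ℝ) = 0
  · simp [hn]
  have hnpos : 0 < |(n : ℝ)| := abs_pos.mpr hn
  have hnsq : 0 < (n : ℝ) ^ 2 := by positivity
  have hsq : |(n : ℝ)| ^ 2 = (n : ℝ) ^ 2 := sq_abs _
  rcases lt_trichotomy ((hcoef a ε n) ^ 2 - (n : ℝ) ^ 2) 0 with hD | hD | hD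
  · -- oscillatory case
    have hcond1 : ¬ (0 < (hcoef a ε n) ^ 2 - (n : ℝ) ^ 2) := by linarith
    rw [Hfun, if_neg hcond1, if_pos hD]
    set μ := Real.sqrt ((n : ℝ) ^ 2 - (hcoef a ε n) ^ 2) with hμdef
    have hμ2 : μ ^ 2 = (n : ℝ) ^ 2 - h ^ 2 := Real.sq_sqrt (by linarith)
    have hμpos : 0 < μ := Real.sqrt_pos.mpr (by linarith)
    have habs : |Real.exp (-h * t) * Real.sin (μ * t) / μ|
        = Real.exp (-h * t) * |Real.sin (μ * t)| / μ := by
      rw [abs_div, abs_mul, Real.abs_exp, abs_of_pos hμpos]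
    have key : |(n : ℝ)| * |Real.sin (μ * t)| ≤ μ * Real.exp (h * t) := by
      have hexp : 1 + h * t ≤ Real.exp (h * t) := by linarith [Real.add_one_le_exp (h * t)]
      have hexp0 : (0:ℝ) < Real.exp (h * t) := Real.exp_pos _
      rcases le_or_gt (μ * t) 1 with hμt | hμt
      · have hs : |Real.sin (μ * t)| ≤ μ * t := by
          calc |Real.sin (μ * t)| ≤ |μ * t| := Real.abs_sin_le_abs
            _ = μ * t := abs_of_nonneg (by positivity)
        have hnt : |(n : ℝ)| * t ≤ Real.exp (h * t) := by
          have e2 : (1 + h * t) ^ 2 ≤ Real.exp (h * t) ^ 2 := by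
            apply pow_le_pow_left₀ (by positivity) hexp
          have hq : (|(n : ℝ)| * t) ^ 2 ≤ Real.exp (h * t) ^ 2 := by
            have e3 : (|(n : ℝ)| * t) ^ 2 = (n : ℝ) ^ 2 * t ^ 2 := by
              rw [mul_pow, hsq]
            have e4 : 0 ≤ μ * t := by positivity
            have e5 : 0 ≤ h * t := mul_nonneg hh0 ht
            nlinarith [sq_nonneg (h * t)]
          nlinarith [mul_nonneg hnpos.le ht]
        calc |(n : ℝ)| * |Real.sin (μ * t)| ≤ |(n : ℝ)| * (μ * t) := by nlinarith
          _ = μ * (|(n : ℝ)| * t) := by ring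
          _ ≤ μ * Real.exp (h * t) := by nlinarith
      · have hs : |Real.sin (μ * t)| ≤ 1 :=
          abs_le.mpr ⟨Real.neg_one_le_sin _, Real.sin_le_one _⟩
        have hq : |(n : ℝ)| ≤ μ * Real.exp (h * t) := by
          have h2 : |(n : ℝ)| ^ 2 ≤ (μ * Real.exp (h * t)) ^ 2 := by
            have e1 : (μ * Real.exp (h * t)) ^ 2 = μ ^ 2 * Real.exp (h * t) ^ 2 := by ring
            have e2 : (1 + h * t) ^ 2 ≤ Real.exp (h * t) ^ 2 := by
              apply pow_le_pow_left₀ (by positivity) hexp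
            have e3 : μ ^ 2 * t ^ 2 ≥ 1 := by nlinarith
            rw [hsq, e1]
            nlinarith [mul_nonneg hh0 ht, sq_nonneg (h * t)]
          nlinarith [mul_pos hμpos hexp0]
        nlinarith
    constructor
    · rw [habs]
      have hexp0 : (0:ℝ) < Real.exp (-h * t) := Real.exp_pos _
      have hee : Real.exp (-h * t) * Real.exp (h * t) = 1 := by
        rw [← Real.exp_add]; ring_nf; exact Real.exp_zero
      have e2 : |(n:ℝ)| * (Real.exp (-h * t) * |Real.sin (μ * t)| / μ)
          = |(n:ℝ)| * (Real.exp (-h * t) * |Real.sin (μ * t)|) / μ := by ring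
      rw [e2, div_le_one hμpos]
      nlinarith [abs_nonneg (Real.sin (μ * t))]
    · intro h2
      exfalso
      have : h < |(n : ℝ)| := by nlinarith
      nlinarith
  · -- critical case
    have hcond1 : ¬ (0 < (hcoef a ε n) ^ 2 - (n : ℝ) ^ 2) := by linarith
    have hcond2 : ¬ ((hcoef a ε n) ^ 2 - (n : ℝ) ^ 2 < 0) := by linarith
    rw [Hfun, if_neg hcond1, if_neg hcond2]
    have hhn : h = |(n : ℝ)| := by
      have e1 : h ^ 2 = (n : ℝ) ^ 2 := by linarith
      calc h = Real.sqrt (h ^ 2) := (Real.sqrt_sq hh0).symm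
        _ = Real.sqrt ((n : ℝ) ^ 2) := by rw [e1]
        _ = |(n : ℝ)| := Real.sqrt_sq_eq_abs _
    have hhpos : 0 < h := by rw [hhn]; exact hnpos
    have habs : |Real.exp (-h * t) * t| = t * Real.exp (-(h * t)) := by
      rw [abs_mul, Real.abs_exp, abs_of_nonneg ht, neg_mul]; ring
    constructor
    · rw [habs, ← hhn]
      have := t_exp_le hhpos ht
      calc h * (t * Real.exp (-(h * t))) ≤ h * (1 / (2 * h)) := by nlinarith
        _ = 1 / 2 := by field_simp
        _ ≤ 1 := by norm_num
    · intro h2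
      exfalso
      have : ε * |(n : ℝ)| * |(n : ℝ)| ≤ 2 * |(n : ℝ)| := by nlinarith
      nlinarith
  · -- hyperbolic case
    rw [Hfun, if_pos hD]
    set ω := Real.sqrt ((hcoef a ε n) ^ 2 - (n : ℝ) ^ 2) with hωdef
    have hω2 : ω ^ 2 = h ^ 2 - (n : ℝ) ^ 2 := Real.sq_sqrt (by linarith)
    have hωpos : 0 < ω := Real.sqrt_pos.mpr hD
    have hωh : ω < h := by nlinarith
    have hsinh : 0 ≤ Real.sinh (ω * t) := Real.sinh_nonneg_iff.mpr (by positivity)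
    have habs : |Real.exp (-h * t) * Real.sinh (ω * t) / ω|
        = Real.exp (-h * t) * Real.sinh (ω * t) / ω := by
      apply abs_of_nonneg
      apply div_nonneg (mul_nonneg (Real.exp_pos _).le hsinh) hωpos.le
    rw [habs]
    constructor
    · have hcase : |(n : ℝ)| ≤ 2 * ω ∨ |(n : ℝ)| ≤ 2 * (h - ω) := by
        rcases le_or_gt (|(n : ℝ)|) (2 * ω) with hx | hx
        · exact Or.inl hx
        · right
          have h5 : 5 * ω ^ 2 < h ^ 2 := by nlinarith
          have h35 : 5 * ω < 3 * h := by nlinarith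
          nlinarith
      have hE := E_bound hωpos hωh ht hnpos hcase
      calc |(n : ℝ)| * (Real.exp (-h * t) * Real.sinh (ω * t) / ω)
          ≤ |(n : ℝ)| * ((ω / |(n : ℝ)|) / ω) := by
            gcongr
        _ = 1 := by field_simp
    · intro h2
      have hhpos : 0 < h := lt_trans hωpos hωh
      have hcase : h ≤ 2 * ω ∨ h ≤ 2 * (h - ω) := by
        rcases le_or_gt h (2 * ω) with hx | hx
        · exact Or.inl hx
        · right; linarith
      have hE := E_bound hωpos hωh ht hhpos hcase
      calc |(n : ℝ)| * (Real.exp (-h * t) * Real.sinh (ω * t) / ω)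
          ≤ |(n : ℝ)| * ((ω / h) / ω) := by
            gcongr
        _ = |(n : ℝ)| / h := by field_simp
        _ ≤ 2 / (ε * |(n : ℝ)|) := by
            rw [div_le_div_iff₀ hhpos (by positivity)]
            nlinarith

theorem stmt15 (a ε : ℝ) (ha : 0 ≤ a) (hε : 0 < ε) (t : ℝ) (ht : 0 ≤ t) :
    Summable (fun n : ℤ => ((n : ℝ) * Hfun a ε n t) ^ 2) ∧
    (∑' n : ℤ, ((n : ℝ) * Hfun a ε n t) ^ 2) <
      2 + 4 / ε + 4 * Real.pi ^ 2 / (3 * ε ^ 2) := by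
  have key := key_bounds a ε ha hε
  set f : ℤ → ℝ := fun n => ((n : ℝ) * Hfun a ε n t) ^ 2 with hfdef
  have habs : ∀ n : ℤ, f n = (|(n : ℝ)| * |Hfun a ε n t|) ^ 2 := by
    intro n
    simp only [hfdef]
    rw [← abs_mul, sq_abs]
  have hf0 : ∀ n : ℤ, 0 ≤ f n := fun n => sq_nonneg _
  have hfone : ∀ n : ℤ, f n ≤ 1 := by
    intro n
    rw [habs n]
    have hk := (key n t ht).1
    nlinarith [mul_nonneg (abs_nonneg ((n:ℝ))) (abs_nonneg (Hfun a ε n t))]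
  have hftail : ∀ n : ℤ, 2 < ε * |(n : ℝ)| → f n ≤ 4 / (ε ^ 2 * (n : ℝ) ^ 2) := by
    intro n hn
    rw [habs n]
    have hk := (key n t ht).2 hn
    have hnp : 0 < |(n : ℝ)| := by nlinarith
    have h0 : 0 ≤ |(n : ℝ)| * |Hfun a ε n t| :=
      mul_nonneg (abs_nonneg _) (abs_nonneg _)
    calc (|(n : ℝ)| * |Hfun a ε n t|) ^ 2 ≤ (2 / (ε * |(n : ℝ)|)) ^ 2 := by
          nlinarith [hk, h0]
      _ = 4 / (ε ^ 2 * (n : ℝ) ^ 2) := by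
          rw [div_pow, mul_pow, sq_abs]; norm_num
  have hmaj : ∀ n : ℤ, f n ≤ 4 / ε ^ 2 * (1 / (n : ℝ) ^ 2) := by
    intro n
    by_cases hn0 : (n : ℝ) = 0
    · simp [hfdef, hn0]
    have hn2 : 0 < (n : ℝ) ^ 2 := by positivity
    rcases le_or_gt (ε * |(n : ℝ)|) 2 with hc | hc
    · have h1 := hfone n
      have hb : (n : ℝ) ^ 2 ≤ 4 / ε ^ 2 := by
        rw [le_div_iff₀ (by positivity : (0:ℝ) < ε ^ 2)]
        nlinarith [sq_abs ((n : ℝ)), abs_nonneg ((n : ℝ)),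
          mul_nonneg hε.le (abs_nonneg ((n : ℝ)))]
      rw [mul_one_div, le_div_iff₀ hn2]
      nlinarith [hf0 n]
    · have h2 := hftail n hc
      have he : 4 / ε ^ 2 * (1 / (n : ℝ) ^ 2) = 4 / (ε ^ 2 * (n : ℝ) ^ 2) := by
        rw [mul_one_div, div_div]
      rw [he]
      exact h2
  have hgsum : Summable (fun n : ℤ => 4 / ε ^ 2 * (1 / (n : ℝ) ^ 2)) :=
    (Real.summable_one_div_int_pow.mpr (by norm_num)).mul_left _
  have hsum : Summable f := Summable.of_nonneg_of_le hf0 hmaj hgsum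
  refine ⟨hsum, ?_⟩
  have hsymm : ∀ n : ℤ, f (-n) = f n := by
    intro n
    have hH : Hfun a ε (-n) t = Hfun a ε n t := by
      rw [Hfun, Hfun, hcoef, hcoef, Int.cast_neg, neg_sq]
    simp only [hfdef]
    rw [hH]
    push_cast
    ring
  have hv : Summable (fun k : ℕ => f (k : ℤ)) :=
    hsum.comp_injective Nat.cast_injective
  have hw : Summable (fun k : ℕ => f (-((k : ℤ) + 1))) :=
    hsum.comp_injective (fun x y hxy => by omega)
  have hsplit : (∑' n : ℤ, f n)
      = (∑' k : ℕ, f (k : ℤ)) + ∑' k : ℕ, f (-((k : ℤ) + 1)) :=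
    tsum_of_nat_of_neg_add_one hv hw
  have hv1 : Summable (fun k : ℕ => f ((k : ℤ) + 1)) := by
    refine ((summable_nat_add_iff (f := fun k : ℕ => f (k : ℤ)) 1).2 hv).congr ?_
    intro k; norm_cast
  have hshift : (∑' k : ℕ, f (-((k : ℤ) + 1))) = ∑' k : ℕ, f ((k : ℤ) + 1) :=
    tsum_congr fun k => hsymm ((k : ℤ) + 1)
  have hf00 : f (0 : ℤ) = 0 := by simp [hfdef]
  have hzero : (∑' k : ℕ, f (k : ℤ)) = ∑' k : ℕ, f ((k : ℤ) + 1) := by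
    rw [Summable.tsum_eq_zero_add hv]
    simp only [Nat.cast_zero, hf00, zero_add]
    exact tsum_congr fun k => by norm_cast
  -- bound the one-sided sum
  set M : ℕ := (⌊(2 : ℝ) / ε⌋).toNat with hMdef
  have hfloor0 : (0 : ℤ) ≤ ⌊(2 : ℝ) / ε⌋ := Int.floor_nonneg.mpr (by positivity)
  have hMcast : ((M : ℕ) : ℝ) = ((⌊(2 : ℝ) / ε⌋ : ℤ) : ℝ) := by
    rw [hMdef]
    exact_mod_cast congrArg (fun z : ℤ => (z : ℝ)) (Int.toNat_of_nonneg hfloor0)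
  have hM : ((M : ℕ) : ℝ) ≤ 2 / ε := by
    rw [hMcast]; exact Int.floor_le _
  have hMlt : 2 / ε < ((M : ℕ) : ℝ) + 1 := by
    rw [hMcast]; exact Int.lt_floor_add_one _
  have hbig : ∀ k : ℕ, M ≤ k → 2 < ε * ((k : ℝ) + 1) := by
    intro k hk
    have hk' : ((M : ℕ) : ℝ) ≤ (k : ℝ) := by exact_mod_cast hk
    have h1 : 2 / ε < (k : ℝ) + 1 := by linarith
    rw [div_lt_iff₀ hε] at h1
    linarith [h1]
  have hsplit2 := Summable.sum_add_tsum_nat_add (f := fun k : ℕ => f ((k : ℤ) + 1)) M hv1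
  have hhead : (∑ i ∈ Finset.range M, f ((i : ℤ) + 1)) ≤ (M : ℝ) := by
    calc (∑ i ∈ Finset.range M, f ((i : ℤ) + 1))
        ≤ ∑ _i ∈ Finset.range M, (1 : ℝ) := Finset.sum_le_sum fun i _ => hfone _
      _ = (M : ℝ) := by simp
  have hzsumshift : Summable (fun i : ℕ => (1 : ℝ) / ((i : ℝ) + 1) ^ 2) := by
    refine ((summable_nat_add_iff (f := fun n : ℕ => (1:ℝ) / (n : ℝ) ^ 2) 1).2
      hasSum_zeta_two.summable).congr ?_
    intro k; push_cast; ring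
  have hzsum : Summable (fun i : ℕ => 4 / ε ^ 2 * ((1 : ℝ) / ((i : ℝ) + 1) ^ 2)) :=
    hzsumshift.mul_left _
  have htail_sum : Summable (fun i : ℕ => f (((i + M : ℕ) : ℤ) + 1)) :=
    (summable_nat_add_iff (f := fun k : ℕ => f ((k : ℤ) + 1)) M).2 hv1
  have htailb : (∑' i : ℕ, f (((i + M : ℕ) : ℤ) + 1))
      ≤ ∑' i : ℕ, 4 / ε ^ 2 * ((1 : ℝ) / ((i : ℝ) + 1) ^ 2) := by
    apply Summable.tsum_le_tsum _ htail_sum hzsum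
    intro i
    have hc : 2 < ε * |((((i + M : ℕ) : ℤ) + 1 : ℤ) : ℝ)| := by
      have h1 := hbig (i + M) (Nat.le_add_left M i)
      have h2 : ((((i + M : ℕ) : ℤ) + 1 : ℤ) : ℝ) = ((i + M : ℕ) : ℝ) + 1 := by push_cast; ring
      rw [h2, abs_of_nonneg (by positivity)]
      exact_mod_cast h1
    have h2 := hftail _ hc
    refine le_trans h2 ?_
    have he : 4 / ε ^ 2 * ((1 : ℝ) / ((i : ℝ) + 1) ^ 2) = 4 / (ε ^ 2 * ((i : ℝ) + 1) ^ 2) := by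
      rw [mul_one_div, div_div]
    rw [he]
    have hm : ((i : ℝ) + 1) ^ 2 ≤ ((((i + M : ℕ) : ℤ) + 1 : ℤ) : ℝ) ^ 2 := by
      have hle : ((i : ℝ) + 1) ≤ ((((i + M : ℕ) : ℤ) + 1 : ℤ) : ℝ) := by
        push_cast; linarith [Nat.cast_nonneg (α := ℝ) M]
      nlinarith [Nat.cast_nonneg (α := ℝ) i]
    apply div_le_div_of_nonneg_left (by norm_num : (0:ℝ) ≤ 4) (by positivity)
    have hε2 : (0:ℝ) < ε ^ 2 := by positivity
    nlinarith
  have hzeta : (∑' i : ℕ, (1 : ℝ) / ((i : ℝ) + 1) ^ 2) = Real.pi ^ 2 / 6 := by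
    have h1 := hasSum_zeta_two.tsum_eq
    rw [Summable.tsum_eq_zero_add hasSum_zeta_two.summable] at h1
    have h2 : (∑' n : ℕ, (1 : ℝ) / ((n + 1 : ℕ) : ℝ) ^ 2) = Real.pi ^ 2 / 6 := by
      simpa using h1
    rw [← h2]
    exact tsum_congr fun i => by norm_cast
  have htsum_rhs : (∑' i : ℕ, 4 / ε ^ 2 * ((1 : ℝ) / ((i : ℝ) + 1) ^ 2))
      = 4 / ε ^ 2 * (Real.pi ^ 2 / 6) := by
    rw [tsum_mul_left, hzeta]
  have hT : (∑' k : ℕ, f ((k : ℤ) + 1)) ≤ 2 / ε + 4 / ε ^ 2 * (Real.pi ^ 2 / 6) := by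
    rw [← hsplit2]
    have := htailb
    rw [htsum_rhs] at this
    linarith
  have hfinal : (∑' n : ℤ, f n) ≤ 4 / ε + 4 * Real.pi ^ 2 / (3 * ε ^ 2) := by
    rw [hsplit, hshift, hzero]
    have heq : 2 * (2 / ε + 4 / ε ^ 2 * (Real.pi ^ 2 / 6))
        = 4 / ε + 4 * Real.pi ^ 2 / (3 * ε ^ 2) := by
      field_simp
      ring
    linarith
  linarith
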